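/- Diamond criterion: if for every element a and successor distributions E, F with a ↦ E and a ↦ F there exists C with E (≈∘⇒_P∘≈) C and F (≈∘⇒_P∘≈) C, then the relation ⇒_P modulo ≈ has the diamond property on all distributions, and hence the PARS is distribution confluent. -/

import Mathlib

open Relation
open scoped NNReal

abbrev PDist (A : Type) := List (ℝ≥0 × A)

namespace PPARS

variable {A X : Type}

/-- Total weight of a list distribution. -/
def weight (D : PDist A) : ℝ≥0 := (D.map Prod.fst).sum

/-- Scale every weight of a distribution by `α`. -/
def scale (α : ℝ≥0) (D : PDist A) : PDist A := D.map (fun pa => (α * pa.1, pa.2))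

open Classical in
/-- Total weight that `D` assigns to the element `a`. -/
noncomputable def wt (D : PDist A) (a : A) : ℝ≥0 :=
  (D.map (fun pa => if pa.2 = a then pa.1 else 0)).sum

/-- The Flip rule, closed under list contexts. -/
inductive FlipS : PDist A → PDist A → Prop
  | mk (E₁ E₂ : PDist A) (p q : ℝ≥0) (a b : A) :
      FlipS (E₁ ++ [(p,a),(q,b)] ++ E₂) (E₁ ++ [(q,b),(p,a)] ++ E₂)

/-- The Join rule, closed under list contexts. -/
inductive JoinS : PDist A → PDist A → Prop
  | mk (E₁ E₂ : PDist A) (p q : ℝ≥0) (a : A) :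
      JoinS (E₁ ++ [(p,a),(q,a)] ++ E₂) (E₁ ++ [(p+q,a)] ++ E₂)

/-- The Split rule, closed under list contexts. -/
inductive SplitS : PDist A → PDist A → Prop
  | mk (E₁ E₂ : PDist A) (p q : ℝ≥0) (a : A) :
      SplitS (E₁ ++ [(p+q,a)] ++ E₂) (E₁ ++ [(p,a),(q,a)] ++ E₂)

/-- One `∼`-step: congruence closure of Flip, Join and Split. -/
def SimStep (D E : PDist A) : Prop := FlipS D E ∨ JoinS D E ∨ SplitS D E

/-- One Flip-or-Join step. -/
def FJ (D E : PDist A) : Prop := FlipS D E ∨ JoinS D E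

/-- Distribution equivalence `≈`. -/
def DEquiv : PDist A → PDist A → Prop := ReflTransGen SimStep

/-- Parallel evolution `⇒_P` for a PARS relation `R`. -/
inductive PEvol (R : A → PDist A → Prop) : PDist A → PDist A → Prop
  | nil : PEvol R [] []
  | keep {ds ds' : PDist A} (p : ℝ≥0) (a : A) :
      PEvol R ds ds' → PEvol R ((p,a) :: ds) ((p,a) :: ds')
  | evolve {a : A} {D ds ds' : PDist A} (p : ℝ≥0) :
      R a D → PEvol R ds ds' → PEvol R ((p,a) :: ds) (scale p D ++ ds')

/-- Proper parallel evolution `⇒_P¹`: at least one element evolves. -/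
inductive PEvol1 (R : A → PDist A → Prop) : PDist A → PDist A → Prop
  | evolve {a : A} {D ds ds' : PDist A} (p : ℝ≥0) :
      R a D → PEvol R ds ds' → PEvol1 R ((p,a) :: ds) (scale p D ++ ds')
  | keep {ds ds' : PDist A} (p : ℝ≥0) (a : A) :
      PEvol1 R ds ds' → PEvol1 R ((p,a) :: ds) ((p,a) :: ds')

/-- The determinisation relation `↠ = ⇒_P ∪ ≈`. -/
def Red (R : A → PDist A → Prop) (D E : PDist A) : Prop := PEvol R D E ∨ DEquiv D E

/-- `R` defines a PARS: successor distributions are normalised. -/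
def IsPARS (R : A → PDist A → Prop) : Prop := ∀ a D, R a D → weight D = 1

/-- A terminal element has no successor distribution. -/
def Terminal (R : A → PDist A → Prop) (a : A) : Prop := ∀ D, ¬ R a D

/-- A terminal distribution contains only terminal elements. -/
def TerminalD (R : A → PDist A → Prop) (D : PDist A) : Prop := ∀ pa ∈ D, Terminal R pa.2

/-- Classical confluence of a relation. -/
def Confluent (r : X → X → Prop) : Prop :=
  ∀ a b c, ReflTransGen r a b → ReflTransGen r a c →
    ∃ d, ReflTransGen r b d ∧ ReflTransGen r c d

/-- Raw (finite) computation trees. -/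
inductive CTree (A : Type) where
  | leaf (a : A)
  | node (a : A) (cs : List (ℝ≥0 × CTree A))

def CTree.root : CTree A → A
  | .leaf a => a
  | .node a _ => a

/-- `IsTree R t a`: `t` is a computation tree of the PARS `R` with root `a`. -/
inductive IsTree (R : A → PDist A → Prop) : CTree A → A → Prop
  | leaf (a : A) : IsTree R (.leaf a) a
  | node (a : A) (cs : List (ℝ≥0 × CTree A)) :
      R a (cs.map fun x => (x.1, x.2.root)) →
      (∀ x ∈ cs, IsTree R x.2 x.2.root) →
      IsTree R (.node a cs) a

mutual
/-- Support of a computation tree. -/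
def supp : CTree A → PDist A
  | .leaf a => [(1, a)]
  | .node _ cs => suppL cs
def suppL : List (ℝ≥0 × CTree A) → PDist A
  | [] => []
  | (p, t) :: ts => scale p (supp t) ++ suppL ts
end

/-- A tree is maximal when all its leaves are terminal elements. -/
inductive MaximalT (R : A → PDist A → Prop) : CTree A → Prop
  | leaf (a : A) : Terminal R a → MaximalT R (.leaf a)
  | node (a : A) (cs : List (ℝ≥0 × CTree A)) :
      (∀ x ∈ cs, MaximalT R x.2) → MaximalT R (.node a cs)

end PPARS


namespace PPARS
variable {A X : Type}

/-- `R` modulo `≈`: an equivalence step, then `r`, then an equivalence step. -/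
def ModE (r : PDist A → PDist A → Prop) : PDist A → PDist A → Prop :=
  Relation.Comp DEquiv (Relation.Comp r DEquiv)

/-- `n`-fold composition of a relation. -/
def npow (r : X → X → Prop) : ℕ → X → X → Prop
  | 0 => Eq
  | n+1 => Relation.Comp r (npow r n)

/-- A local relation on distributions. -/
def LocalRel (r : PDist A → PDist A → Prop) : Prop :=
  ∀ (α β : ℝ≥0) (D₁ D₂ E : PDist A), r (scale α D₁ ++ scale β D₂) E →
    ∃ E₁ E₂, E = scale α E₁ ++ scale β E₂ ∧ r D₁ E₁ ∧ r D₂ E₂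

/-- A compositional relation on distributions. -/
def Compositional (r : PDist A → PDist A → Prop) : Prop :=
  ∀ (α β : ℝ≥0) (D₁ E₁ D₂ E₂ : PDist A), r D₁ E₁ → r D₂ E₂ →
    r (scale α D₁ ++ scale β D₂) (scale α E₁ ++ scale β E₂)

/-- `(γ, δ)` closes `(α, β)` on `D`. -/
def Closes (γ δ α β : PDist A → PDist A → Prop) (D : PDist A) : Prop :=
  ∀ E F, α D E → β D F → ∃ C, γ E C ∧ δ F C

open Classical in
/-- Liveness: total weight assigned to non-terminal elements. -/
noncomputable def liv (R : A → PDist A → Prop) (D : PDist A) : ℝ≥0 :=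
  (D.map (fun pa => if Terminal R pa.2 then 0 else pa.1)).sum

/-- L¹ distance between mathematical distributions. -/
noncomputable def fdist (f g : A → ℝ≥0) : ℝ := ∑' a : A, |(f a : ℝ) - (g a : ℝ)|

/-- L¹ distance between the mathematical distributions induced by two list
distributions. -/
noncomputable def ldist (D E : PDist A) : ℝ := fdist (wt D) (wt E)

end PPARS


namespace PPARS
variable {A : Type} {R : A → PDist A → Prop}

/-! ### Basic lemmas about `scale` -/

@[simp] lemma scale_nil (α : ℝ≥0) : scale α ([] : PDist A) = [] := rfl

@[simp] lemma scale_cons (α p : ℝ≥0) (a : A) (D : PDist A) :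
    scale α ((p, a) :: D) = (α * p, a) :: scale α D := rfl

@[simp] lemma scale_append (α : ℝ≥0) (D E : PDist A) :
    scale α (D ++ E) = scale α D ++ scale α E := List.map_append

@[simp] lemma scale_scale (α β : ℝ≥0) (D : PDist A) :
    scale α (scale β D) = scale (α * β) D := by
  induction D with
  | nil => rfl
  | cons x D ih => cases x with | mk p a => simp [ih, mul_assoc]

/-! ### Basic lemmas about `SimStep` and `DEquiv` -/

lemma simStep_symm {D E : PDist A} (h : SimStep D E) : SimStep E D := by
  rcases h with h | h | h
  · rcases h with ⟨E₁, E₂, p, q, a, b⟩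
    exact Or.inl (FlipS.mk E₁ E₂ q p b a)
  · rcases h with ⟨E₁, E₂, p, q, a⟩
    exact Or.inr (Or.inr (SplitS.mk E₁ E₂ p q a))
  · rcases h with ⟨E₁, E₂, p, q, a⟩
    exact Or.inr (Or.inl (JoinS.mk E₁ E₂ p q a))

lemma dequiv_refl (D : PDist A) : DEquiv D D := ReflTransGen.refl

lemma dequiv_trans {D E F : PDist A} (h₁ : DEquiv D E) (h₂ : DEquiv E F) : DEquiv D F :=
  ReflTransGen.trans h₁ h₂

lemma dequiv_symm {D E : PDist A} (h : DEquiv D E) : DEquiv E D :=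
  by
  induction h with
  | refl => exact ReflTransGen.refl
  | tail _ hs ih => exact ReflTransGen.head (simStep_symm hs) ih

lemma simStep_context {D E : PDist A} (X Y : PDist A) (h : SimStep D E) :
    SimStep (X ++ D ++ Y) (X ++ E ++ Y) := by
  rcases h with h | h | h
  · rcases h with ⟨E₁, E₂, p, q, a, b⟩
    refine Or.inl ?_
    have := FlipS.mk (X ++ E₁) (E₂ ++ Y) p q a b
    simpa [List.append_assoc] using this
  · rcases h with ⟨E₁, E₂, p, q, a⟩
    refine Or.inr (Or.inl ?_)
    have := JoinS.mk (X ++ E₁) (E₂ ++ Y) p q a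
    simpa [List.append_assoc] using this
  · rcases h with ⟨E₁, E₂, p, q, a⟩
    refine Or.inr (Or.inr ?_)
    have := SplitS.mk (X ++ E₁) (E₂ ++ Y) p q a
    simpa [List.append_assoc] using this

lemma dequiv_context {D E : PDist A} (X Y : PDist A) (h : DEquiv D E) :
    DEquiv (X ++ D ++ Y) (X ++ E ++ Y) := by
  induction h with
  | refl => exact dequiv_refl _
  | tail _ hstep ih => exact ih.tail (simStep_context X Y hstep)

lemma dequiv_append {D₁ E₁ D₂ E₂ : PDist A} (h₁ : DEquiv D₁ E₁) (h₂ : DEquiv D₂ E₂) :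
    DEquiv (D₁ ++ D₂) (E₁ ++ E₂) := by
  have l : DEquiv (D₁ ++ D₂) (E₁ ++ D₂) := by
    simpa using dequiv_context ([] : PDist A) D₂ h₁
  have r : DEquiv (E₁ ++ D₂) (E₁ ++ E₂) := by
    simpa using dequiv_context E₁ ([] : PDist A) h₂
  exact l.trans r

lemma dequiv_cons (x : ℝ≥0 × A) {D E : PDist A} (h : DEquiv D E) :
    DEquiv (x :: D) (x :: E) := dequiv_append (dequiv_refl [x]) h

lemma simStep_scale (α : ℝ≥0) {D E : PDist A} (h : SimStep D E) :
    SimStep (scale α D) (scale α E) := by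
  rcases h with h | h | h
  · rcases h with ⟨E₁, E₂, p, q, a, b⟩
    refine Or.inl ?_
    have := FlipS.mk (scale α E₁) (scale α E₂) (α * p) (α * q) a b
    simpa [List.append_assoc] using this
  · rcases h with ⟨E₁, E₂, p, q, a⟩
    refine Or.inr (Or.inl ?_)
    have := JoinS.mk (scale α E₁) (scale α E₂) (α * p) (α * q) a
    simpa [List.append_assoc, mul_add] using this
  · rcases h with ⟨E₁, E₂, p, q, a⟩
    refine Or.inr (Or.inr ?_)
    have := SplitS.mk (scale α E₁) (scale α E₂) (α * p) (α * q) a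
    simpa [List.append_assoc, mul_add] using this

lemma dequiv_scale (α : ℝ≥0) {D E : PDist A} (h : DEquiv D E) :
    DEquiv (scale α D) (scale α E) := by
  induction h with
  | refl => exact dequiv_refl _
  | tail _ hstep ih => exact ih.tail (simStep_scale α hstep)

lemma dequiv_of_perm {D E : PDist A} (h : D.Perm E) : DEquiv D E := by
  induction h with
  | nil => exact dequiv_refl _
  | cons x _ ih => exact dequiv_cons x ih
  | swap x y l =>
      exact ReflTransGen.single (Or.inl (FlipS.mk [] l y.1 x.1 y.2 x.2))
  | trans _ _ ih₁ ih₂ => exact ih₁.trans ih₂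

/-- `p·C ++ q·C ≈ (p+q)·C`. -/
lemma scale_add_dequiv (C : PDist A) (p q : ℝ≥0) :
    DEquiv (scale p C ++ scale q C) (scale (p + q) C) := by
  induction C with
  | nil => exact dequiv_refl _
  | cons x C ih =>
      cases x with | mk r z =>
      have h1 : DEquiv ((p * r, z) :: (scale p C ++ (q * r, z) :: scale q C))
          ((p * r, z) :: (q * r, z) :: (scale p C ++ scale q C)) :=
        dequiv_cons _ (dequiv_of_perm List.perm_middle)
      have h2 : SimStep ((p * r, z) :: (q * r, z) :: (scale p C ++ scale q C))
          ((p * r + q * r, z) :: (scale p C ++ scale q C)) :=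
        Or.inr (Or.inl (JoinS.mk [] (scale p C ++ scale q C) (p * r) (q * r) z))
      have h3 : DEquiv ((p * r + q * r, z) :: (scale p C ++ scale q C))
          (((p + q) * r, z) :: scale (p + q) C) := by
        rw [add_mul]; exact dequiv_cons _ ih
      simpa [DEquiv] using (h1.tail h2).trans h3

/-! ### Basic lemmas about `PEvol` -/

lemma pevol_refl (D : PDist A) : PEvol R D D := by
  induction D with
  | nil => exact PEvol.nil
  | cons x D ih => exact PEvol.keep x.1 x.2 ih

lemma pevol_append {D₁ E₁ D₂ E₂ : PDist A} (h₁ : PEvol R D₁ E₁) (h₂ : PEvol R D₂ E₂) :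
    PEvol R (D₁ ++ D₂) (E₁ ++ E₂) := by
  induction h₁ with
  | nil => exact h₂
  | keep p a _ ih => exact PEvol.keep p a ih
  | evolve p ha _ ih =>
      have := PEvol.evolve p ha ih
      simpa [List.append_assoc] using this

lemma pevol_scale (α : ℝ≥0) {D E : PDist A} (h : PEvol R D E) :
    PEvol R (scale α D) (scale α E) := by
  induction h with
  | nil => exact PEvol.nil
  | keep p a _ ih => exact PEvol.keep (α * p) a ih
  | evolve p ha _ ih =>
      have := PEvol.evolve (α * p) ha ih
      simpa [mul_comm, mul_assoc] using this

lemma pevol_append_inv {X Y E : PDist A} (h : PEvol R (X ++ Y) E) :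
    ∃ Ex Ey, E = Ex ++ Ey ∧ PEvol R X Ex ∧ PEvol R Y Ey := by
  induction X generalizing E with
  | nil => exact ⟨[], E, rfl, PEvol.nil, h⟩
  | cons x X ih =>
      cases x with | mk p a =>
      cases h with
      | keep _ _ h' =>
          obtain ⟨Ex, Ey, rfl, hx, hy⟩ := ih h'
          exact ⟨(p, a) :: Ex, Ey, rfl, PEvol.keep p a hx, hy⟩
      | evolve _ ha h' =>
          obtain ⟨Ex, Ey, rfl, hx, hy⟩ := ih h'
          exact ⟨scale p _ ++ Ex, Ey, by simp [List.append_assoc], PEvol.evolve p ha hx, hy⟩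

/-- Behaviour of a single entry under `PEvol`. -/
def Blk (p : ℝ≥0) (a : A) (B : PDist A) : Prop :=
  B = [(p, a)] ∨ ∃ D, R a D ∧ B = scale p D

lemma pevol_single_inv {p : ℝ≥0} {a : A} {B : PDist A} (h : PEvol R [(p, a)] B) :
    Blk (R := R) p a B := by
  cases h with
  | keep _ _ h' => cases h'; exact Or.inl rfl
  | evolve _ ha h' => cases h'; exact Or.inr ⟨_, ha, by simp⟩

lemma pevol_of_blk {p : ℝ≥0} {a : A} {B : PDist A} (h : Blk (R := R) p a B) :
    PEvol R [(p, a)] B := by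
  rcases h with rfl | ⟨D, ha, rfl⟩
  · exact pevol_refl _
  · have := PEvol.evolve (R := R) p ha PEvol.nil
    simpa using this

/-! ### Basic lemmas about `ModE (PEvol R)` -/

lemma mod_intro {D D' E' E : PDist A} (h₁ : DEquiv D D') (h₂ : PEvol R D' E')
    (h₃ : DEquiv E' E) : ModE (PEvol R) D E := ⟨D', h₁, E', h₂, h₃⟩

lemma mod_refl (D : PDist A) : ModE (PEvol R) D D :=
  mod_intro (dequiv_refl D) (pevol_refl D) (dequiv_refl D)

lemma mod_of_pevol {D E : PDist A} (h : PEvol R D E) : ModE (PEvol R) D E :=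
  mod_intro (dequiv_refl D) h (dequiv_refl E)

lemma dequiv_mod {D₀ D E : PDist A} (h : DEquiv D₀ D) (m : ModE (PEvol R) D E) :
    ModE (PEvol R) D₀ E := by
  obtain ⟨D', h₁, E', h₂, h₃⟩ := m
  exact mod_intro (h.trans h₁) h₂ h₃

lemma mod_dequiv {D E E₀ : PDist A} (m : ModE (PEvol R) D E) (h : DEquiv E E₀) :
    ModE (PEvol R) D E₀ := by
  obtain ⟨D', h₁, E', h₂, h₃⟩ := m
  exact mod_intro h₁ h₂ (h₃.trans h)

lemma mod_append {D₁ E₁ D₂ E₂ : PDist A} (m₁ : ModE (PEvol R) D₁ E₁)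
    (m₂ : ModE (PEvol R) D₂ E₂) : ModE (PEvol R) (D₁ ++ D₂) (E₁ ++ E₂) := by
  obtain ⟨D₁', a₁, E₁', b₁, c₁⟩ := m₁
  obtain ⟨D₂', a₂, E₂', b₂, c₂⟩ := m₂
  exact mod_intro (dequiv_append a₁ a₂) (pevol_append b₁ b₂) (dequiv_append c₁ c₂)

lemma mod_scale (α : ℝ≥0) {D E : PDist A} (m : ModE (PEvol R) D E) :
    ModE (PEvol R) (scale α D) (scale α E) := by
  obtain ⟨D', a₁, E', b₁, c₁⟩ := m
  exact mod_intro (dequiv_scale α a₁) (pevol_scale α b₁) (dequiv_scale α c₁)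

lemma mod_cons (x : ℝ≥0 × A) {D E : PDist A} (m : ModE (PEvol R) D E) :
    ModE (PEvol R) (x :: D) (x :: E) := mod_append (mod_refl [x]) m

/-- Same-source diamond for `⇒_P` via `⇒_P` modulo `≈`. -/
lemma pevol_diamond
    (h : ∀ (a : A) (E F : PDist A), R a E → R a F →
      ∃ C, ModE (PEvol R) E C ∧ ModE (PEvol R) F C)
    {D E F : PDist A} (h₁ : PEvol R D E) (h₂ : PEvol R D F) :
    ∃ C, ModE (PEvol R) E C ∧ ModE (PEvol R) F C := by
  induction h₁ generalizing F with
  | nil => cases h₂; exact ⟨[], mod_refl _, mod_refl _⟩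
  | @keep ds ds' p a _ ih =>
      cases h₂ with
      | keep _ _ h₂' =>
          obtain ⟨C', m₁, m₂⟩ := ih h₂'
          exact ⟨(p, a) :: C', mod_cons _ m₁, mod_cons _ m₂⟩
      | @evolve _ Db _ _ _ hb h₂' =>
          obtain ⟨C', m₁, m₂⟩ := ih h₂'
          exact ⟨scale p Db ++ C',
            mod_append (mod_of_pevol (pevol_of_blk (Or.inr ⟨Db, hb, rfl⟩))) m₁,
            mod_append (mod_refl _) m₂⟩
  | @evolve a Da ds ds' p ha _ ih =>
      cases h₂ with
      | keep _ _ h₂' =>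
          obtain ⟨C', m₁, m₂⟩ := ih h₂'
          exact ⟨scale p Da ++ C', mod_append (mod_refl _) m₁,
            mod_append (mod_of_pevol (pevol_of_blk (Or.inr ⟨Da, ha, rfl⟩))) m₂⟩
      | @evolve _ Db _ _ _ hb h₂' =>
          obtain ⟨C₀, ma, mb⟩ := h a Da Db ha hb
          obtain ⟨C', m₁, m₂⟩ := ih h₂'
          exact ⟨scale p C₀ ++ C', mod_append (mod_scale p ma) m₁,
            mod_append (mod_scale p mb) m₂⟩

end PPARS
namespace PPARS
variable {A : Type}

/-- Positional case analysis for two marked occurrences in a list. -/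
lemma cons_eq_append_cases {α : Type*} :
    ∀ {E₁ : List α} {u : α} {E₂ F₁ : List α} {u' : α} {F₂ : List α},
      E₁ ++ u :: E₂ = F₁ ++ u' :: F₂ →
      (E₁ = F₁ ∧ u = u' ∧ E₂ = F₂) ∨
      (∃ K, F₁ = E₁ ++ u :: K ∧ E₂ = K ++ u' :: F₂) ∨
      (∃ K, E₁ = F₁ ++ u' :: K ∧ F₂ = K ++ u :: E₂) := by
  intro E₁
  induction E₁ with
  | nil =>
      intro u E₂ F₁ u' F₂ h
      cases F₁ with
      | nil =>
          simp only [List.nil_append, List.cons.injEq] at h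
          exact Or.inl ⟨rfl, h.1, h.2⟩
      | cons f F' =>
          simp only [List.nil_append, List.cons_append, List.cons.injEq] at h
          exact Or.inr (Or.inl ⟨F', by simp [h.1], h.2⟩)
  | cons e E' ih =>
      intro u E₂ F₁ u' F₂ h
      cases F₁ with
      | nil =>
          simp only [List.cons_append, List.nil_append, List.cons.injEq] at h
          exact Or.inr (Or.inr ⟨E', by simp [h.1], h.2.symm⟩)
      | cons f F' =>
          simp only [List.cons_append, List.cons.injEq] at h
          obtain ⟨rfl, h⟩ := h
          rcases ih h with ⟨rfl, rfl, rfl⟩ | ⟨K, rfl, rfl⟩ | ⟨K, rfl, rfl⟩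
          · exact Or.inl ⟨rfl, rfl, rfl⟩
          · exact Or.inr (Or.inl ⟨K, by simp, rfl⟩)
          · exact Or.inr (Or.inr ⟨K, by simp, rfl⟩)

/-- Flip-or-split: the refinement relation. -/
def SF : PDist A → PDist A → Prop := fun D E => FlipS D E ∨ SplitS D E

lemma sf_flip (E₁ E₂ : PDist A) (u v : ℝ≥0 × A) :
    SF (E₁ ++ u :: v :: E₂) (E₁ ++ v :: u :: E₂) := by
  refine Or.inl ?_
  have := FlipS.mk E₁ E₂ u.1 v.1 u.2 v.2
  simpa [List.append_assoc] using this

lemma sf_split (E₁ E₂ : PDist A) (p q : ℝ≥0) (z : A) :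
    SF (E₁ ++ (p + q, z) :: E₂) (E₁ ++ (p, z) :: (q, z) :: E₂) := by
  refine Or.inr ?_
  have := SplitS.mk E₁ E₂ p q z
  simpa [List.append_assoc] using this

lemma flipS_inv {D E : PDist A} (h : FlipS D E) :
    ∃ (E₁ E₂ : PDist A) (u v : ℝ≥0 × A), D = E₁ ++ u :: v :: E₂ ∧ E = E₁ ++ v :: u :: E₂ := by
  rcases h with ⟨E₁, E₂, p, q, a, b⟩
  exact ⟨E₁, E₂, (p, a), (q, b), by simp, by simp⟩

lemma splitS_inv {D E : PDist A} (h : SplitS D E) :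
    ∃ E₁ E₂ p q z, D = E₁ ++ ((p + q : ℝ≥0), z) :: E₂ ∧ E = E₁ ++ (p, z) :: (q, z) :: E₂ := by
  rcases h with ⟨E₁, E₂, p, q, a⟩
  exact ⟨E₁, E₂, p, q, a, by simp, by simp⟩

/-- Strong confluence of flip-or-split. -/
lemma sf_strong : ∀ (a b c : PDist A), SF a b → SF a c →
    ∃ d, ReflGen SF b d ∧ ReflTransGen SF c d := by
  rintro a b c (hab | hab) (hac | hac)
  · -- flip / flip
    obtain ⟨E₁, E₂, u, v, rfl, rfl⟩ := flipS_inv hab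
    obtain ⟨F₁, F₂, u', v', heq, rfl⟩ := flipS_inv hac
    rcases cons_eq_append_cases heq with ⟨rfl, rfl, h⟩ | ⟨K, rfl, h⟩ | ⟨K, rfl, h⟩
    · obtain ⟨rfl, rfl⟩ : v = v' ∧ E₂ = F₂ := by
        simpa using h
      exact ⟨_, ReflGen.refl, ReflTransGen.refl⟩
    · cases K with
      | nil =>
          obtain ⟨rfl, rfl⟩ : v = u' ∧ E₂ = v' :: F₂ := by simpa using h
          -- braid: b = E₁++v::u::v'::F₂, c = (E₁++[u])++v'::v::F₂
          refine ⟨E₁ ++ v :: u :: v' :: F₂, ReflGen.refl, ?_⟩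
          have s₁ : SF ((E₁ ++ [u]) ++ v' :: v :: F₂) ((E₁ ++ [u]) ++ v :: v' :: F₂) :=
            sf_flip _ _ _ _
          have s₂ : SF (E₁ ++ u :: v :: v' :: F₂) (E₁ ++ v :: u :: v' :: F₂) :=
            sf_flip E₁ (v' :: F₂) u v
          have e : (E₁ ++ [u]) ++ v :: v' :: F₂ = E₁ ++ u :: v :: v' :: F₂ := by simp
          exact ReflTransGen.head s₁ (ReflTransGen.single (e ▸ s₂))
      | cons w K' =>
          obtain ⟨rfl, rfl⟩ : v = w ∧ E₂ = K' ++ u' :: v' :: F₂ := by simpa using h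
          refine ⟨E₁ ++ v :: u :: (K' ++ v' :: u' :: F₂), ?_, ?_⟩
          · refine ReflGen.single ?_
            have := sf_flip (E₁ ++ v :: u :: K') F₂ u' v'
            simpa [List.append_assoc] using this
          · refine ReflTransGen.single ?_
            have := sf_flip E₁ (K' ++ v' :: u' :: F₂) u v
            simpa [List.append_assoc] using this
    · cases K with
      | nil =>
          obtain ⟨rfl, rfl⟩ : v' = u ∧ F₂ = v :: E₂ := by simpa using h
          refine ⟨(F₁ ++ [u']) ++ v :: v' :: E₂, ReflGen.refl, ?_⟩
          have s₁ : SF (F₁ ++ v' :: u' :: v :: E₂) (F₁ ++ u' :: v' :: v :: E₂) :=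
            sf_flip F₁ (v :: E₂) v' u'
          have s₂ : SF ((F₁ ++ [u']) ++ v' :: v :: E₂) ((F₁ ++ [u']) ++ v :: v' :: E₂) :=
            sf_flip _ _ _ _
          have e : F₁ ++ u' :: v' :: v :: E₂ = (F₁ ++ [u']) ++ v' :: v :: E₂ := by simp
          exact ReflTransGen.head s₁ (ReflTransGen.single (e ▸ s₂))
      | cons w K' =>
          obtain ⟨rfl, rfl⟩ : v' = w ∧ F₂ = K' ++ u :: v :: E₂ := by simpa using h
          refine ⟨F₁ ++ v' :: u' :: (K' ++ v :: u :: E₂), ?_, ?_⟩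
          · refine ReflGen.single ?_
            have := sf_flip F₁ (K' ++ v :: u :: E₂) u' v'
            simpa [List.append_assoc] using this
          · refine ReflTransGen.single ?_
            have := sf_flip (F₁ ++ v' :: u' :: K') E₂ u v
            simpa [List.append_assoc] using this
  · -- flip / split
    obtain ⟨E₁, E₂, u, v, rfl, rfl⟩ := flipS_inv hab
    obtain ⟨F₁, F₂, p, q, z, heq, rfl⟩ := splitS_inv hac
    rcases cons_eq_append_cases heq with ⟨rfl, rfl, rfl⟩ | ⟨K, rfl, h⟩ | ⟨K, rfl, h⟩
    · -- u = (p+q,z), F₂ = v::E₂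
      refine ⟨E₁ ++ v :: (p, z) :: (q, z) :: E₂, ?_, ?_⟩
      · refine ReflGen.single ?_
        have := sf_split (E₁ ++ [v]) E₂ p q z
        simpa [List.append_assoc] using this
      · -- c = E₁ ++ (p,z)::(q,z)::v::E₂  →  E₁ ++ (p,z)::v::(q,z)::E₂  →  d
        have t₁ : SF (E₁ ++ (p, z) :: (q, z) :: v :: E₂) (E₁ ++ (p, z) :: v :: (q, z) :: E₂) := by
          have := sf_flip (E₁ ++ [(p, z)]) E₂ (q, z) v
          simpa [List.append_assoc] using this
        have t₂ : SF (E₁ ++ (p, z) :: v :: (q, z) :: E₂) (E₁ ++ v :: (p, z) :: (q, z) :: E₂) :=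
          sf_flip E₁ ((q, z) :: E₂) (p, z) v
        exact ReflTransGen.head t₁ (ReflTransGen.single t₂)
    · cases K with
      | nil =>
          obtain ⟨rfl, rfl⟩ : v = (p + q, z) ∧ E₂ = F₂ := by simpa using h
          -- b = E₁++(p+q,z)::u::E₂, c = (E₁++[u])++(p,z)::(q,z)::E₂
          refine ⟨E₁ ++ (p, z) :: (q, z) :: u :: E₂, ?_, ?_⟩
          · exact ReflGen.single (sf_split E₁ (u :: E₂) p q z)
          · have t₁ : SF ((E₁ ++ [u]) ++ (p, z) :: (q, z) :: E₂)
                (E₁ ++ (p, z) :: u :: (q, z) :: E₂) := by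
              have := sf_flip E₁ ((q, z) :: E₂) u (p, z)
              simpa [List.append_assoc] using this
            have t₂ : SF (E₁ ++ (p, z) :: u :: (q, z) :: E₂)
                (E₁ ++ (p, z) :: (q, z) :: u :: E₂) := by
              have := sf_flip (E₁ ++ [(p, z)]) E₂ u (q, z)
              simpa [List.append_assoc] using this
            exact ReflTransGen.head t₁ (ReflTransGen.single t₂)
      | cons w K' =>
          obtain ⟨rfl, rfl⟩ : v = w ∧ E₂ = K' ++ (p + q, z) :: F₂ := by simpa using h
          refine ⟨E₁ ++ v :: u :: (K' ++ (p, z) :: (q, z) :: F₂), ?_, ?_⟩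
          · refine ReflGen.single ?_
            have := sf_split (E₁ ++ v :: u :: K') F₂ p q z
            simpa [List.append_assoc] using this
          · refine ReflTransGen.single ?_
            have := sf_flip E₁ (K' ++ (p, z) :: (q, z) :: F₂) u v
            simpa [List.append_assoc] using this
    · -- disjoint: E₁ = F₁ ++ (p+q,z)::K, F₂ = K ++ u::v::E₂
      obtain rfl : F₂ = K ++ u :: v :: E₂ := h
      refine ⟨F₁ ++ (p, z) :: (q, z) :: (K ++ v :: u :: E₂), ?_, ?_⟩
      · refine ReflGen.single ?_
        have := sf_split F₁ (K ++ v :: u :: E₂) p q z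
        simpa [List.append_assoc] using this
      · refine ReflTransGen.single ?_
        have := sf_flip (F₁ ++ (p, z) :: (q, z) :: K) E₂ u v
        simpa [List.append_assoc] using this
  · -- split / flip
    obtain ⟨E₁, E₂, p, q, z, rfl, rfl⟩ := splitS_inv hab
    obtain ⟨F₁, F₂, u', v', heq, rfl⟩ := flipS_inv hac
    rcases cons_eq_append_cases heq with ⟨rfl, rfl, rfl⟩ | ⟨K, rfl, h⟩ | ⟨K, rfl, h⟩
    · -- u' = (p+q,z), E₂ = v'::F₂
      refine ⟨E₁ ++ (p, z) :: v' :: (q, z) :: F₂, ?_, ?_⟩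
      · refine ReflGen.single ?_
        have := sf_flip (E₁ ++ [(p, z)]) F₂ (q, z) v'
        simpa [List.append_assoc] using this
      · have t₁ : SF (E₁ ++ v' :: (p + q, z) :: F₂) (E₁ ++ v' :: (p, z) :: (q, z) :: F₂) := by
          have := sf_split (E₁ ++ [v']) F₂ p q z
          simpa [List.append_assoc] using this
        have t₂ : SF (E₁ ++ v' :: (p, z) :: (q, z) :: F₂)
            (E₁ ++ (p, z) :: v' :: (q, z) :: F₂) :=
          sf_flip E₁ ((q, z) :: F₂) v' (p, z)
        exact ReflTransGen.head t₁ (ReflTransGen.single t₂)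
    · -- disjoint: F₁ = E₁ ++ (p+q,z)::K, E₂ = K ++ u'::v'::F₂
      obtain rfl : E₂ = K ++ u' :: v' :: F₂ := h
      refine ⟨E₁ ++ (p, z) :: (q, z) :: (K ++ v' :: u' :: F₂), ?_, ?_⟩
      · refine ReflGen.single ?_
        have := sf_flip (E₁ ++ (p, z) :: (q, z) :: K) F₂ u' v'
        simpa [List.append_assoc] using this
      · refine ReflTransGen.single ?_
        have := sf_split E₁ (K ++ v' :: u' :: F₂) p q z
        simpa [List.append_assoc] using this
    · cases K with
      | nil =>
          obtain ⟨rfl, rfl⟩ : v' = (p + q, z) ∧ F₂ = E₂ := by simpa using h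
          -- b = (F₁++[u'])++(p,z)::(q,z)::E₂, c = F₁++(p+q,z)::u'::E₂
          refine ⟨F₁ ++ (p, z) :: u' :: (q, z) :: F₂, ?_, ?_⟩
          · refine ReflGen.single ?_
            have := sf_flip F₁ ((q, z) :: F₂) u' (p, z)
            simpa [List.append_assoc] using this
          · have t₁ : SF (F₁ ++ (p + q, z) :: u' :: F₂)
                (F₁ ++ (p, z) :: (q, z) :: u' :: F₂) :=
              sf_split F₁ (u' :: F₂) p q z
            have t₂ : SF (F₁ ++ (p, z) :: (q, z) :: u' :: F₂)
                (F₁ ++ (p, z) :: u' :: (q, z) :: F₂) := by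
              have := sf_flip (F₁ ++ [(p, z)]) F₂ (q, z) u'
              simpa [List.append_assoc] using this
            exact ReflTransGen.head t₁ (ReflTransGen.single t₂)
      | cons w K' =>
          obtain ⟨rfl, rfl⟩ : v' = w ∧ F₂ = K' ++ (p + q, z) :: E₂ := by simpa using h
          refine ⟨F₁ ++ v' :: u' :: (K' ++ (p, z) :: (q, z) :: E₂), ?_, ?_⟩
          · refine ReflGen.single ?_
            have := sf_flip F₁ (K' ++ (p, z) :: (q, z) :: E₂) u' v'
            simpa [List.append_assoc] using this
          · refine ReflTransGen.single ?_
            have := sf_split (F₁ ++ v' :: u' :: K') E₂ p q z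
            simpa [List.append_assoc] using this
  · -- split / split
    obtain ⟨E₁, E₂, p, q, z, rfl, rfl⟩ := splitS_inv hab
    obtain ⟨F₁, F₂, p', q', z', heq, rfl⟩ := splitS_inv hac
    rcases cons_eq_append_cases heq with ⟨rfl, hu, rfl⟩ | ⟨K, rfl, rfl⟩ | ⟨K, rfl, rfl⟩
    · obtain ⟨hpq, rfl⟩ : p + q = p' + q' ∧ z = z' := by
        simpa [Prod.ext_iff] using hu
      rcases le_total p p' with hle | hle
      · have h₁ : (q : ℝ≥0) = (p' - p) + q' := by
          rw [tsub_add_eq_add_tsub hle, ← hpq, add_tsub_cancel_left]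
        have h₂ : (p' : ℝ≥0) = p + (p' - p) := (add_tsub_cancel_of_le hle).symm
        refine ⟨E₁ ++ (p, z) :: (p' - p, z) :: (q', z) :: E₂, ?_, ?_⟩
        · refine ReflGen.single ?_
          have := sf_split (E₁ ++ [(p, z)]) E₂ (p' - p) q' z
          rw [← h₁] at this
          simpa [List.append_assoc] using this
        · refine ReflTransGen.single ?_
          have := sf_split E₁ ((q', z) :: E₂) p (p' - p) z
          rw [← h₂] at this
          simpa using this
      · have h₁ : (p : ℝ≥0) = p' + (p - p') := (add_tsub_cancel_of_le hle).symm
        have h₂ : (q' : ℝ≥0) = (p - p') + q := by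
          rw [tsub_add_eq_add_tsub hle, hpq, add_tsub_cancel_left]
        refine ⟨E₁ ++ (p', z) :: (p - p', z) :: (q, z) :: E₂, ?_, ?_⟩
        · refine ReflGen.single ?_
          have := sf_split E₁ ((q, z) :: E₂) p' (p - p') z
          rw [← h₁] at this
          simpa using this
        · refine ReflTransGen.single ?_
          have := sf_split (E₁ ++ [(p', z)]) E₂ (p - p') q z
          rw [← h₂] at this
          simpa [List.append_assoc] using this
    · refine ⟨E₁ ++ (p, z) :: (q, z) :: (K ++ (p', z') :: (q', z') :: F₂), ?_, ?_⟩
      · refine ReflGen.single ?_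
        have := sf_split (E₁ ++ (p, z) :: (q, z) :: K) F₂ p' q' z'
        simpa [List.append_assoc] using this
      · refine ReflTransGen.single ?_
        have := sf_split E₁ (K ++ (p', z') :: (q', z') :: F₂) p q z
        simpa [List.append_assoc] using this
    · refine ⟨F₁ ++ (p', z') :: (q', z') :: (K ++ (p, z) :: (q, z) :: E₂), ?_, ?_⟩
      · refine ReflGen.single ?_
        have := sf_split F₁ (K ++ (p, z) :: (q, z) :: E₂) p' q' z'
        simpa [List.append_assoc] using this
      · refine ReflTransGen.single ?_
        have := sf_split (F₁ ++ (p', z') :: (q', z') :: K) E₂ p q z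
        simpa [List.append_assoc] using this

end PPARS
namespace PPARS
variable {A : Type} {R : A → PDist A → Prop}

lemma joinS_inv {D E : PDist A} (h : JoinS D E) :
    ∃ E₁ E₂ p q z, D = E₁ ++ ((p : ℝ≥0), z) :: ((q : ℝ≥0), z) :: E₂ ∧
      E = E₁ ++ (p + q, z) :: E₂ := by
  rcases h with ⟨E₁, E₂, p, q, a⟩
  exact ⟨E₁, E₂, p, q, a, by simp, by simp⟩

lemma flipS_symm {D E : PDist A} (h : FlipS D E) : FlipS E D := by
  rcases h with ⟨E₁, E₂, p, q, a, b⟩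
  exact FlipS.mk E₁ E₂ q p b a

lemma joinS_splitS {D E : PDist A} (h : JoinS D E) : SplitS E D := by
  rcases h with ⟨E₁, E₂, p, q, a⟩
  exact SplitS.mk E₁ E₂ p q a

lemma splitS_joinS {D E : PDist A} (h : SplitS D E) : JoinS E D := by
  rcases h with ⟨E₁, E₂, p, q, a⟩
  exact JoinS.mk E₁ E₂ p q a

lemma rtg_sf_rev {X Y : PDist A} (h : ReflTransGen (SF (A := A)) X Y) :
    ReflTransGen (FJ (A := A)) Y X := by
  induction h with
  | refl => exact ReflTransGen.refl
  | tail _ hstep ih =>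
      refine ReflTransGen.head ?_ ih
      rcases hstep with hf | hs
      · exact Or.inl (flipS_symm hf)
      · exact Or.inr (splitS_joinS hs)

/-- One flip-or-join ancestor step is simulated by `⇒_P` up to `≈`. -/
lemma fj_pevol {D' D E : PDist A} (hfj : FJ D' D) (hp : PEvol R D E) :
    ∃ E', PEvol R D' E' ∧ DEquiv E' E := by
  rcases hfj with hf | hj
  · obtain ⟨E₁, E₂, u, v, hD', hD⟩ := flipS_inv hf
    subst hD' hD
    obtain ⟨G₁, M, rfl, hG₁, hM⟩ := pevol_append_inv hp
    obtain ⟨Bv, M₂, rfl, hBv, hM₂⟩ :=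
      pevol_append_inv (R := R) (X := [v]) (Y := u :: E₂) hM
    obtain ⟨Bu, G₂, rfl, hBu, hG₂⟩ :=
      pevol_append_inv (R := R) (X := [u]) (Y := E₂) hM₂
    refine ⟨G₁ ++ (Bu ++ (Bv ++ G₂)), ?_, ?_⟩
    · exact pevol_append hG₁ (pevol_append hBu (pevol_append hBv hG₂))
    · have hperm : DEquiv ((Bu ++ Bv) ++ G₂) ((Bv ++ Bu) ++ G₂) :=
        dequiv_of_perm (List.perm_append_comm.append_right G₂)
      have := dequiv_append (dequiv_refl G₁) hperm
      simpa [List.append_assoc] using this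
  · obtain ⟨E₁, E₂, p, q, z, hD', hD⟩ := joinS_inv hj
    subst hD' hD
    obtain ⟨G₁, M, rfl, hG₁, hM⟩ := pevol_append_inv hp
    obtain ⟨B, G₂, rfl, hB, hG₂⟩ :=
      pevol_append_inv (R := R) (X := [((p + q : ℝ≥0), z)]) (Y := E₂) hM
    rcases pevol_single_inv hB with rfl | ⟨Dc, hc, rfl⟩
    · refine ⟨G₁ ++ ((p, z) :: (q, z) :: G₂), ?_, ?_⟩
      · exact pevol_append hG₁ (PEvol.keep p z (PEvol.keep q z hG₂))
      · refine ReflTransGen.single (Or.inr (Or.inl ?_))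
        have := JoinS.mk G₁ G₂ p q z
        simpa [List.append_assoc] using this
    · refine ⟨G₁ ++ (scale p Dc ++ (scale q Dc ++ G₂)), ?_, ?_⟩
      · exact pevol_append hG₁ (PEvol.evolve p hc (PEvol.evolve q hc hG₂))
      · have h₁ : DEquiv ((scale p Dc ++ scale q Dc) ++ G₂) (scale (p + q) Dc ++ G₂) :=
          dequiv_append (scale_add_dequiv Dc p q) (dequiv_refl G₂)
        have := dequiv_append (dequiv_refl G₁) h₁
        simpa [List.append_assoc] using this

lemma fjstar_pevol {A₀ D E : PDist A} (hfj : ReflTransGen (FJ (A := A)) A₀ D)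
    (hp : PEvol R D E) : ∃ E', PEvol R A₀ E' ∧ DEquiv E' E := by
  induction hfj using ReflTransGen.head_induction_on with
  | refl => exact ⟨E, hp, dequiv_refl E⟩
  | head hstep _ ih =>
      obtain ⟨E₁, hp₁, he₁⟩ := ih
      obtain ⟨E₀, hp₀, he₀⟩ := fj_pevol hstep hp₁
      exact ⟨E₀, hp₀, he₀.trans he₁⟩

/-- Common refinement of `≈`-equivalent distributions. -/
lemma dequiv_common {D₁ D₂ : PDist A} (h : DEquiv D₁ D₂) :
    ∃ c, ReflTransGen (SF (A := A)) D₁ c ∧ ReflTransGen (SF (A := A)) D₂ c := by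
  induction h with
  | refl => exact ⟨D₁, ReflTransGen.refl, ReflTransGen.refl⟩
  | @tail b d₂ _ hstep ih =>
      obtain ⟨c, r₁, r₂⟩ := ih
      have : SF b d₂ ∨ SF d₂ b := by
        rcases hstep with hf | hjn | hs
        · exact Or.inl (Or.inl hf)
        · exact Or.inr (Or.inr (joinS_splitS hjn))
        · exact Or.inl (Or.inr hs)
      rcases this with hsf | hsf
      · obtain ⟨e, he₁, he₂⟩ :=
          Relation.church_rosser (fun a b c hab hac => sf_strong a b c hab hac)
            (ReflTransGen.single hsf) r₂
        exact ⟨e, r₁.trans he₂, he₁⟩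
      · exact ⟨c, r₁, (ReflTransGen.single hsf).trans r₂⟩

/-- Peaks of `⇒_P` over `≈`-equivalent sources close by `⇒_P` modulo `≈`. -/
lemma peak_mod
    (h : ∀ (a : A) (E F : PDist A), R a E → R a F →
      ∃ C, ModE (PEvol R) E C ∧ ModE (PEvol R) F C)
    {D₁ D₂ E F : PDist A} (he : DEquiv D₁ D₂) (h₁ : PEvol R D₁ E) (h₂ : PEvol R D₂ F) :
    ∃ C, ModE (PEvol R) E C ∧ ModE (PEvol R) F C := by
  obtain ⟨c, r₁, r₂⟩ := dequiv_common he
  obtain ⟨E₀, pe, eqE⟩ := fjstar_pevol (rtg_sf_rev r₁) h₁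
  obtain ⟨F₀, pf, eqF⟩ := fjstar_pevol (rtg_sf_rev r₂) h₂
  obtain ⟨C, m₁, m₂⟩ := pevol_diamond h pe pf
  exact ⟨C, dequiv_mod (dequiv_symm eqE) m₁, dequiv_mod (dequiv_symm eqF) m₂⟩

/-- The diamond property for `⇒_P` modulo `≈`. -/
lemma mod_diamond
    (h : ∀ (a : A) (E F : PDist A), R a E → R a F →
      ∃ C, ModE (PEvol R) E C ∧ ModE (PEvol R) F C)
    (D E F : PDist A) (m₁ : ModE (PEvol R) D E) (m₂ : ModE (PEvol R) D F) :
    ∃ C, ModE (PEvol R) E C ∧ ModE (PEvol R) F C := by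
  obtain ⟨D₁, e₁, E₁, p₁, e₁'⟩ := m₁
  obtain ⟨D₂, e₂, F₁, p₂, e₂'⟩ := m₂
  obtain ⟨C, mE, mF⟩ := peak_mod h ((dequiv_symm e₁).trans e₂) p₁ p₂
  exact ⟨C, dequiv_mod (dequiv_symm e₁') mE, dequiv_mod (dequiv_symm e₂') mF⟩

lemma red_mod {D E : PDist A} (hr : Red R D E) : ModE (PEvol R) D E := by
  rcases hr with hp | hd
  · exact mod_of_pevol hp
  · exact mod_intro hd (pevol_refl E) (dequiv_refl E)

lemma mod_redstar {D E : PDist A} (m : ModE (PEvol R) D E) : ReflTransGen (Red R) D E := by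
  obtain ⟨D', e₁, E', p₁, e₂⟩ := m
  exact ReflTransGen.head (Or.inr e₁)
    (ReflTransGen.head (Or.inl p₁) (ReflTransGen.single (Or.inr e₂)))

lemma rtg_mod_redstar {D E : PDist A}
    (m : ReflTransGen (ModE (PEvol R)) D E) : ReflTransGen (Red R) D E := by
  induction m with
  | refl => exact ReflTransGen.refl
  | tail _ hstep ih => exact ih.trans (mod_redstar hstep)

end PPARS
open PPARS Relation in
/-- Diamond criterion: closing all `↦`-peaks by `≈ ∘ ⇒_P ∘ ≈` gives the diamond
property for `⇒_P` modulo `≈` on all distributions, hence distribution confluence. -/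
theorem diamond_criterion {A : Type} (R : A → PDist A → Prop) (hR : IsPARS R)
    (h : ∀ (a : A) (E F : PDist A), R a E → R a F →
      ∃ C, ModE (PEvol R) E C ∧ ModE (PEvol R) F C) :
    (∀ D E F : PDist A, ModE (PEvol R) D E → ModE (PEvol R) D F →
      ∃ C, ModE (PEvol R) E C ∧ ModE (PEvol R) F C) ∧ Confluent (Red R) := by
  refine ⟨mod_diamond h, ?_⟩
  intro a b c hab hac
  have hab' : ReflTransGen (ModE (PEvol R)) a b :=
    ReflTransGen.mono (fun _ _ hr => red_mod hr) _ _ hab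
  have hac' : ReflTransGen (ModE (PEvol R)) a c :=
    ReflTransGen.mono (fun _ _ hr => red_mod hr) _ _ hac
  obtain ⟨d, hbd, hcd⟩ :=
    Relation.church_rosser
      (fun x y z hxy hxz => by
        obtain ⟨C, m₁, m₂⟩ := mod_diamond h x y z hxy hxz
        exact ⟨C, ReflGen.single m₁, ReflTransGen.single m₂⟩)
      hab' hac'
  exact ⟨d, rtg_mod_redstar hbd, rtg_mod_redstar hcd⟩
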